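/- Let G be a ternary semigroup and A a real normed ring whose norm is multiplicative, i.e. ‖ab‖ = ‖a‖·‖b‖ for all a, b ∈ A. Let ε ≥ 0 and suppose f : G → A satisfies ‖f([xyz]) − f(x)·f(y)·f(z)‖ ≤ ε for all x, y, z ∈ G. Then either ‖f(x)‖ ≤ δ for all x ∈ G, where δ = (1 + √(1 + 4ε))/2, or f([xyz]) = f(x)·f(y)·f(z) for all x, y, z ∈ G. -/
import Mathlib


theorem stmt_7 {G : Type*} (op : G → G → G → G)
    (assoc : ∀ x y z u v : G,
      op (op x y z) u v = op x (op y z u) v ∧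
      op x (op y z u) v = op x y (op z u v))
    {A : Type*} [NormedRing A]
    (hmul : ∀ a b : A, ‖a * b‖ = ‖a‖ * ‖b‖)
    (ε : ℝ) (hε : 0 ≤ ε) (f : G → A)
    (hf : ∀ x y z : G, ‖f (op x y z) - f x * f y * f z‖ ≤ ε) :
    (∀ x : G, ‖f x‖ ≤ (1 + Real.sqrt (1 + 4 * ε)) / 2) ∨
      (∀ x y z : G, f (op x y z) = f x * f y * f z) := by
  by_cases hb : ∀ x : G, ‖f x‖ ≤ (1 + Real.sqrt (1 + 4 * ε)) / 2
  · exact Or.inl hb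
  right
  rcases eq_or_lt_of_le hε with hε0 | hε0
  · intro x y z
    have h := hf x y z
    rw [← hε0] at h
    exact sub_eq_zero.mp (norm_le_zero_iff.mp h)
  push_neg at hb
  obtain ⟨a, ha⟩ := hb
  set δ := (1 + Real.sqrt (1 + 4 * ε)) / 2 with hδdef
  have hs : Real.sqrt (1 + 4 * ε) ^ 2 = 1 + 4 * ε := Real.sq_sqrt (by linarith)
  have hsn := Real.sqrt_nonneg (1 + 4 * ε)
  have hδ2 : δ ^ 2 = δ + ε := by rw [hδdef]; nlinarith
  have hδ1 : 1 < δ := by rw [hδdef]; nlinarith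
  obtain ⟨b, hb0, hbs⟩ : ∃ b : ℕ → G, b 0 = a ∧
      ∀ n, b (n + 1) = op (b n) (b n) (b n) :=
    ⟨fun n => Nat.rec a (fun _ g => op g g g) n, rfl, fun n => rfl⟩
  have hca : 0 < ‖f a‖ - δ := by linarith
  have hgrow : ∀ n, δ + (δ + ε) ^ n * (‖f a‖ - δ) ≤ ‖f (b n)‖ := by
    intro n
    induction n with
    | zero => simp [hb0]
    | succ n ih =>
      have hp : (0:ℝ) ≤ (δ + ε) ^ n * (‖f a‖ - δ) :=
        mul_nonneg (pow_nonneg (by linarith) n) (by linarith)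
      have hc : δ ≤ ‖f (b n)‖ := by linarith
      have h1 : ‖f (b n) * f (b n) * f (b n)‖ - ‖f (b (n + 1))‖ ≤ ε := by
        have h := hf (b n) (b n) (b n)
        rw [← hbs n] at h
        calc ‖f (b n) * f (b n) * f (b n)‖ - ‖f (b (n + 1))‖
            ≤ ‖f (b n) * f (b n) * f (b n) - f (b (n + 1))‖ := norm_sub_norm_le _ _
          _ = ‖f (b (n + 1)) - f (b n) * f (b n) * f (b n)‖ := norm_sub_rev _ _
          _ ≤ ε := h
      have h2 : ‖f (b n) * f (b n) * f (b n)‖ = ‖f (b n)‖ ^ 3 := by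
        rw [hmul, hmul]; ring
      have step1 : (δ + ε) * (‖f (b n)‖ - δ) ≤ ‖f (b n)‖ ^ 3 - ε - δ := by
        nlinarith [hδ2, mul_nonneg (mul_nonneg (norm_nonneg (f (b n)))
          (sub_nonneg.mpr hc)) (show (0:ℝ) ≤ ‖f (b n)‖ + δ by
            have := norm_nonneg (f (b n)); linarith),
          mul_nonneg (show (0:ℝ) ≤ δ by linarith) hε]
      have step2 : (δ + ε) ^ n * (‖f a‖ - δ) * (δ + ε) ≤ (‖f (b n)‖ - δ) * (δ + ε) :=
        mul_le_mul_of_nonneg_right (by linarith) (by linarith)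
      rw [pow_succ]
      nlinarith [step1, step2, h1, h2]
  intro x y z
  by_contra hne
  set D := f (op x y z) - f x * f y * f z with hDdef
  have hD : 0 < ‖D‖ := norm_pos_iff.mpr (sub_ne_zero.mpr hne)
  have key : ∀ u : G, ‖D‖ * (‖f u‖ * ‖f u‖) ≤ ε + ε + ‖f x‖ * ε * ‖f u‖ := by
    intro u
    have e1 := hf (op x y z) u u
    have e2 := hf x (op y z u) u
    have e3 := hf y z u
    have ha1 : op (op x y z) u u = op x (op y z u) u := (assoc x y z u u).1
    rw [ha1] at e1
    have hid : D * f u * f u =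
        -(f (op x (op y z u) u) - f (op x y z) * f u * f u) +
        (f (op x (op y z u) u) - f x * f (op y z u) * f u) +
        f x * (f (op y z u) - f y * f z * f u) * f u := by
      rw [hDdef]; noncomm_ring
    have h3 : ‖f x * (f (op y z u) - f y * f z * f u) * f u‖ ≤ ‖f x‖ * ε * ‖f u‖ := by
      rw [hmul, hmul]
      exact mul_le_mul_of_nonneg_right
        (mul_le_mul_of_nonneg_left e3 (norm_nonneg _)) (norm_nonneg _)
    calc ‖D‖ * (‖f u‖ * ‖f u‖) = ‖D * f u * f u‖ := by rw [hmul, hmul]; ring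
      _ = ‖-(f (op x (op y z u) u) - f (op x y z) * f u * f u) +
          (f (op x (op y z u) u) - f x * f (op y z u) * f u) +
          f x * (f (op y z u) - f y * f z * f u) * f u‖ := by
            rw [hid]
      _ ≤ ‖-(f (op x (op y z u) u) - f (op x y z) * f u * f u)‖ +
          ‖f (op x (op y z u) u) - f x * f (op y z u) * f u‖ +
          ‖f x * (f (op y z u) - f y * f z * f u) * f u‖ := norm_add₃_le
      _ ≤ ε + ε + ‖f x‖ * ε * ‖f u‖ := by
            have e1' : ‖-(f (op x (op y z u) u) - f (op x y z) * f u * f u)‖ ≤ ε := by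
              rw [norm_neg]; exact e1
            linarith [e1', e2, h3]
  set K := 2 * ε + ‖f x‖ * ε with hKdef
  have hK : 0 ≤ K := by positivity
  obtain ⟨n, hn⟩ := pow_unbounded_of_one_lt (K / ‖D‖ / (‖f a‖ - δ))
    (show 1 < δ + ε by linarith)
  have hcn : K / ‖D‖ < ‖f (b n)‖ := by
    rw [div_lt_iff₀ hca] at hn
    have := hgrow n
    have hδ0 : 0 < δ := by linarith
    linarith
  have hc1 : 1 < ‖f (b n)‖ := by
    have := hgrow n
    have hp : (0:ℝ) ≤ (δ + ε) ^ n * (‖f a‖ - δ) :=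
      mul_nonneg (pow_nonneg (by linarith) n) (by linarith)
    linarith
  have hk := key (b n)
  have hKc : K < ‖D‖ * ‖f (b n)‖ := by
    rw [div_lt_iff₀ hD] at hcn
    linarith [mul_comm ‖D‖ ‖f (b n)‖]
  nlinarith [hk, hKc, mul_pos hD (show (0:ℝ) < ‖f (b n)‖ by linarith),
    norm_nonneg (f x)]
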